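/- Let n ≥ 1, δ > 0, and suppose A ⊆ ℂ is a set such that every w ∈ A has at least n preimages in A under f : ℂ → ℂ, pairwise δ-separated. Then for every j, the maximal cardinality K(j, δ) of a (j,δ)-separated subset of the closure of A (assumed compact, with f continuous on it) satisfies K(j,δ) ≥ n^j, and hence limsup_{j→∞} (1/j) log K(j,δ) ≥ log n. -/

import Mathlib

open Filter

/-- `(j,δ)`-separated subset of `X` for `f`. -/
def IsSeparatedSet (f : ℂ → ℂ) (X : Set ℂ) (j : ℕ) (δ : ℝ) (E : Set ℂ) : Prop :=
  E ⊆ X ∧ (∀ z ∈ E, ∀ k < j, f^[k] z ∈ X) ∧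
    ∀ z ∈ E, ∀ w ∈ E, z ≠ w → ∃ k < j, δ < dist (f^[k] z) (f^[k] w)

/-- `K(j,δ)`: maximal cardinality of a `(j,δ)`-separated subset of `X`. -/
noncomputable def maxSepCard (f : ℂ → ℂ) (X : Set ℂ) (j : ℕ) (δ : ℝ) : ℕ :=
  sSup {m : ℕ | ∃ E : Finset ℂ, IsSeparatedSet f X j δ ↑E ∧ E.card = m}

lemma sep_card_le (f : ℂ → ℂ) (X : Set ℂ) (δ : ℝ) (t : Finset ℂ)
    (ht : X ⊆ ⋃ y ∈ t, Metric.ball y (δ/2)) (j : ℕ) (E : Finset ℂ)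
    (hE : IsSeparatedSet f X j δ ↑E) : E.card ≤ (insert (0:ℂ) t).card ^ j := by
  classical
  set t' : Finset ℂ := insert (0:ℂ) t with ht'
  set g : ℂ → Fin j → ℂ := fun z k =>
    if h : ∃ y ∈ t, f^[k] z ∈ Metric.ball y (δ/2) then h.choose else 0 with hg
  have hmaps : ∀ z ∈ E, g z ∈ Fintype.piFinset (fun _ : Fin j => t') := by
    intro z hz
    rw [Fintype.mem_piFinset]
    intro k
    by_cases h : ∃ y ∈ t, f^[k] z ∈ Metric.ball y (δ/2)
    · simp only [hg, dif_pos h]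
      exact Finset.mem_insert_of_mem h.choose_spec.1
    · simp only [hg, dif_neg h]
      exact Finset.mem_insert_self _ _
  have hinj : Set.InjOn g ↑E := by
    intro z hz w hw hgw
    by_contra hne
    obtain ⟨k, hk, hsep⟩ := hE.2.2 z hz w hw hne
    have hzX := hE.2.1 z hz k hk
    have hwX := hE.2.1 w hw k hk
    have hz' : ∃ y ∈ t, f^[k] z ∈ Metric.ball y (δ/2) := by
      simpa using ht hzX
    have hw' : ∃ y ∈ t, f^[k] w ∈ Metric.ball y (δ/2) := by
      simpa using ht hwX
    have h1 : dist (f^[k] z) (g z ⟨k, hk⟩) < δ/2 := by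
      simp only [hg, dif_pos hz']; exact hz'.choose_spec.2
    have h2 : dist (f^[k] w) (g w ⟨k, hk⟩) < δ/2 := by
      simp only [hg, dif_pos hw']
      exact hw'.choose_spec.2
    rw [hgw] at h1
    have := dist_triangle_right (f^[k] z) (f^[k] w) (g w ⟨k, hk⟩)
    linarith
  have := Finset.card_le_card_of_injOn g hmaps hinj
  rwa [Fintype.card_piFinset, Finset.prod_const, Finset.card_univ, Fintype.card_fin] at this

lemma construct_sep (f : ℂ → ℂ) (A : Set ℂ) (hA : A.Nonempty)
    (n : ℕ) (δ : ℝ) (hδ : 0 < δ)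
    (hbranch : ∀ w ∈ A, ∃ z : Fin n → ℂ,
      (∀ i, z i ∈ A ∧ f (z i) = w) ∧
      ∀ i j, i ≠ j → δ < ‖z i - z j‖) (j : ℕ) :
    ∃ E : Finset ℂ, ↑E ⊆ A ∧ (∀ z ∈ E, ∀ k < j, f^[k] z ∈ A) ∧
      (∀ z ∈ E, ∀ w ∈ E, z ≠ w → ∃ k < j, δ < dist (f^[k] z) (f^[k] w)) ∧
      n ^ j ≤ E.card := by
  classical
  have hb : ∀ w : ℂ, ∃ z : Fin n → ℂ, w ∈ A →
      ((∀ i, z i ∈ A ∧ f (z i) = w) ∧ ∀ i j, i ≠ j → δ < ‖z i - z j‖) := by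
    intro w
    by_cases hw : w ∈ A
    · obtain ⟨z, hz⟩ := hbranch w hw
      exact ⟨z, fun _ => hz⟩
    · exact ⟨fun _ => 0, fun h => absurd h hw⟩
  choose zf hzf using hb
  induction j with
  | zero =>
      obtain ⟨a, ha⟩ := hA
      refine ⟨{a}, by simpa using ha, by simp, ?_, by simp⟩
      intro z hz w hw hne
      simp only [Finset.mem_singleton] at hz hw
      exact absurd (hz.trans hw.symm) hne
  | succ j ih =>
      obtain ⟨E, hEA, horb, hsep, hcard⟩ := ih
      set E' : Finset ℂ := (E ×ˢ (Finset.univ : Finset (Fin n))).image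
          (fun p => zf p.1 p.2) with hE'
      have hmem : ∀ x ∈ E', ∃ w ∈ E, ∃ i, x = zf w i := by
        intro x hx
        simp only [hE', Finset.mem_image, Finset.mem_product] at hx
        obtain ⟨⟨w, i⟩, ⟨hw, _⟩, rfl⟩ := hx
        exact ⟨w, hw, i, rfl⟩
      have hz : ∀ w ∈ E, ∀ i, zf w i ∈ A ∧ f (zf w i) = w := by
        intro w hw i
        exact (hzf w (hEA hw)).1 i
      have hzsep : ∀ w ∈ E, ∀ i i' : Fin n, i ≠ i' →
          δ < dist (zf w i) (zf w i') := by
        intro w hw i i' hne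
        rw [Complex.dist_eq]
        exact (hzf w (hEA hw)).2 i i' hne
      refine ⟨E', ?_, ?_, ?_, ?_⟩
      · intro x hx
        obtain ⟨w, hw, i, rfl⟩ := hmem x hx
        exact (hz w hw i).1
      · intro x hx k hk
        obtain ⟨w, hw, i, rfl⟩ := hmem x hx
        match k, hk with
        | 0, _ => exact (hz w hw i).1
        | (m+1), hk =>
            rw [Function.iterate_succ_apply, (hz w hw i).2]
            exact horb w hw m (by omega)
      · intro x hx y hy hne
        obtain ⟨w, hw, i, rfl⟩ := hmem x hx
        obtain ⟨w', hw', i', rfl⟩ := hmem y hy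
        by_cases hww : w = w'
        · subst hww
          have hii : i ≠ i' := by rintro rfl; exact hne rfl
          exact ⟨0, by omega, by simpa using hzsep w hw i i' hii⟩
        · obtain ⟨k, hk, hd⟩ := hsep w hw w' hw' hww
          refine ⟨k + 1, by omega, ?_⟩
          rw [Function.iterate_succ_apply, Function.iterate_succ_apply,
            (hz w hw i).2, (hz w' hw' i').2]
          exact hd
      · have hinj : Set.InjOn (fun p : ℂ × Fin n => zf p.1 p.2)
            ↑(E ×ˢ (Finset.univ : Finset (Fin n))) := by
          rintro ⟨w, i⟩ hwi ⟨w', i'⟩ hwi' heq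
          simp only [Finset.coe_product, Set.mem_prod, Finset.mem_coe] at hwi hwi'
          simp only at heq
          have hww : w = w' := by
            rw [← (hz w hwi.1 i).2, ← (hz w' hwi'.1 i').2, heq]
          subst hww
          have : i = i' := by
            by_contra hii
            have := hzsep w hwi.1 i i' hii
            rw [heq, dist_self] at this
            linarith
          rw [this]
        have := Finset.card_image_of_injOn hinj
        rw [hE', this, Finset.card_product, Finset.card_univ, Fintype.card_fin]
        calc n ^ (j+1) = n ^ j * n := by ring
          _ ≤ E.card * n := Nat.mul_le_mul_right n hcard

/-- If every point of `A` has at least `n` preimages in `A` under `f`, pairwise at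
distance `> δ`, then `K(j,δ) ≥ n^j` on the compact closure of `A`, and hence
`limsup (1/j) log K(j,δ) ≥ log n`. -/
theorem maxSepCard_ge_pow_of_branching
    (f : ℂ → ℂ) (hf : Continuous f) (A : Set ℂ) (hA : A.Nonempty)
    (hX : IsCompact (closure A))
    (n : ℕ) (hn : 1 ≤ n) (δ : ℝ) (hδ : 0 < δ)
    (hbranch : ∀ w ∈ A, ∃ z : Fin n → ℂ,
      (∀ i, z i ∈ A ∧ f (z i) = w) ∧
      ∀ i j, i ≠ j → δ < ‖z i - z j‖) :
    (∀ j : ℕ, n ^ j ≤ maxSepCard f (closure A) j δ) ∧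
    Real.log n ≤
      limsup (fun j : ℕ => Real.log (maxSepCard f (closure A) j δ) / j) atTop := by
  classical
  -- a finite δ/2-net for the compact closure
  obtain ⟨t0, ht0fin, ht0⟩ := (Metric.totallyBounded_iff.1 hX.totallyBounded) (δ/2)
    (by linarith)
  set t : Finset ℂ := ht0fin.toFinset with htdef
  have ht : closure A ⊆ ⋃ y ∈ t, Metric.ball y (δ/2) := by
    simpa [htdef, Set.Finite.mem_toFinset] using ht0
  set N : ℕ := (insert (0:ℂ) t).card with hNdef
  have hN1 : 1 ≤ N := Finset.card_pos.2 ⟨0, Finset.mem_insert_self _ _⟩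
  have hbdd : ∀ j : ℕ, ∀ m ∈ {m : ℕ | ∃ E : Finset ℂ,
      IsSeparatedSet f (closure A) j δ ↑E ∧ E.card = m}, m ≤ N ^ j := by
    rintro j m ⟨E, hE, rfl⟩
    exact sep_card_le f (closure A) δ t ht j E hE
  have hK_ge : ∀ j : ℕ, n ^ j ≤ maxSepCard f (closure A) j δ := by
    intro j
    obtain ⟨E, hEA, horb, hsep, hcard⟩ := construct_sep f A hA n δ hδ hbranch j
    have hE : IsSeparatedSet f (closure A) j δ ↑E :=
      ⟨hEA.trans subset_closure, fun z hz k hk => subset_closure (horb z hz k hk), hsep⟩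
    calc n ^ j ≤ E.card := hcard
      _ ≤ maxSepCard f (closure A) j δ :=
        le_csSup ⟨N ^ j, fun m hm => hbdd j m hm⟩ ⟨E, hE, rfl⟩
  have hK_le : ∀ j : ℕ, maxSepCard f (closure A) j δ ≤ N ^ j := by
    intro j
    refine csSup_le ⟨0, ⟨∅, ⟨by simp, by simp, by simp⟩, by simp⟩⟩ (hbdd j)
  refine ⟨hK_ge, ?_⟩
  have hKpos : ∀ j : ℕ, (1 : ℝ) ≤ (maxSepCard f (closure A) j δ : ℝ) := by
    intro j
    have := hK_ge j
    have h1 : 1 ≤ n ^ j := Nat.one_le_pow _ _ hn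
    exact_mod_cast le_trans h1 this
  have hup : ∀ j : ℕ,
      Real.log (maxSepCard f (closure A) j δ) / j ≤ Real.log N := by
    intro j
    rcases Nat.eq_zero_or_pos j with rfl | hj
    · simp
      exact Real.log_nonneg (by exact_mod_cast hN1)
    · have hlog : Real.log (maxSepCard f (closure A) j δ) ≤ j * Real.log N := by
        have h1 : (maxSepCard f (closure A) j δ : ℝ) ≤ (N : ℝ) ^ j := by
          exact_mod_cast hK_le j
        calc Real.log (maxSepCard f (closure A) j δ)
            ≤ Real.log ((N : ℝ) ^ j) :=
              Real.log_le_log (by linarith [hKpos j]) h1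
          _ = j * Real.log N := by rw [← Real.rpow_natCast, Real.log_rpow (by exact_mod_cast hN1 : (0:ℝ) < (N:ℝ))]
      rw [div_le_iff₀ (by exact_mod_cast hj : (0:ℝ) < (j:ℝ))]
      calc Real.log (maxSepCard f (closure A) j δ) ≤ j * Real.log N := hlog
        _ = Real.log N * j := by ring
  have hlow : ∀ j : ℕ, 1 ≤ j →
      Real.log n ≤ Real.log (maxSepCard f (closure A) j δ) / j := by
    intro j hj
    rw [le_div_iff₀ (by exact_mod_cast hj : (0:ℝ) < (j:ℝ))]
    have h1 : ((n : ℝ)) ^ j ≤ (maxSepCard f (closure A) j δ : ℝ) := by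
      exact_mod_cast hK_ge j
    have hnj : (0:ℝ) < (n:ℝ) ^ j := by positivity
    calc Real.log n * j = Real.log ((n : ℝ) ^ j) := by rw [Real.log_pow]; ring
      _ ≤ Real.log (maxSepCard f (closure A) j δ) := Real.log_le_log hnj h1
  refine le_limsup_of_frequently_le ?_ ?_
  · exact (eventually_atTop.2 ⟨1, hlow⟩).frequently
  · exact ⟨Real.log N, eventually_map.2 (Eventually.of_forall hup)⟩
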